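/- Let O_1, O_2 ∈ ℝ^{d×r} have orthonormal columns, with r < d. Then there exist matrices R_1, R_2 ∈ ℝ^{d×(d-r)} with orthonormal columns such that A_1 = [O_1, R_1] and A_2 = [O_2, R_2] are d×d orthogonal matrices, and ‖A_1 - A_2‖ ≤ √2·‖O_1 - O_2‖, where ‖·‖ denotes the spectral norm. -/

import Mathlib

open Matrix
open scoped Matrix.Norms.L2Operator

section Stmt17Aux
open scoped InnerProductSpace

namespace Stmt17Aux

variable {m n p : Type*} [Fintype m] [Fintype n] [Fintype p] [DecidableEq m] [DecidableEq n]
  [DecidableEq p]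

lemma dot_self_nonneg (v : m → ℝ) : 0 ≤ v ⬝ᵥ v :=
  Finset.sum_nonneg fun _ _ => mul_self_nonneg _

lemma dot_AB (A : Matrix m n ℝ) (B : Matrix m p ℝ) (x : n → ℝ) (y : p → ℝ) :
    (A *ᵥ x) ⬝ᵥ (B *ᵥ y) = x ⬝ᵥ ((Aᵀ * B) *ᵥ y) := by
  rw [← mulVec_mulVec, Matrix.dotProduct_mulVec x, Matrix.vecMul_transpose]

lemma dot_tr (A : Matrix m n ℝ) (x : n → ℝ) (y : m → ℝ) :
    x ⬝ᵥ (Aᵀ *ᵥ y) = (A *ᵥ x) ⬝ᵥ y := by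
  rw [Matrix.dotProduct_mulVec x, Matrix.vecMul_transpose]

lemma dot_left (A : Matrix m n ℝ) (x : m → ℝ) (y : n → ℝ) :
    x ⬝ᵥ (A *ᵥ y) = (Aᵀ *ᵥ x) ⬝ᵥ y := by
  rw [Matrix.dotProduct_mulVec, Matrix.mulVec_transpose]

lemma dot_sq_le (a b : m → ℝ) : (a ⬝ᵥ b) ^ 2 ≤ (a ⬝ᵥ a) * (b ⬝ᵥ b) := by
  have h := Finset.sum_mul_sq_le_sq_mul_sq Finset.univ a b
  have h1 : ∀ v : m → ℝ, (∑ i, v i ^ 2) = v ⬝ᵥ v := by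
    intro v; simp [dotProduct, sq]
  simpa [dotProduct, h1 a, h1 b] using h

lemma enorm_eq (v : m → ℝ) : ‖(EuclideanSpace.equiv m ℝ).symm v‖ = Real.sqrt (v ⬝ᵥ v) := by
  rw [EuclideanSpace.norm_eq]
  congr 1
  simp [dotProduct, sq]

lemma enorm_sq (v : m → ℝ) : ‖(EuclideanSpace.equiv m ℝ).symm v‖ ^ 2 = v ⬝ᵥ v := by
  rw [enorm_eq, Real.sq_sqrt (dot_self_nonneg v)]

lemma enorm_sq' (x : EuclideanSpace ℝ n) : ‖x‖ ^ 2 = (x : n → ℝ) ⬝ᵥ (x : n → ℝ) :=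
  enorm_sq (x : n → ℝ)

lemma norm_le_of_dot (A : Matrix m n ℝ) {c : ℝ} (hc : 0 ≤ c)
    (h : ∀ x : n → ℝ, (A *ᵥ x) ⬝ᵥ (A *ᵥ x) ≤ c ^ 2 * (x ⬝ᵥ x)) : ‖A‖ ≤ c := by
  rw [Matrix.l2_opNorm_def]
  refine ContinuousLinearMap.opNorm_le_bound _ hc fun x => ?_
  have hx : ((Matrix.toEuclideanLin.trans LinearMap.toContinuousLinearMap) A) x
      = (EuclideanSpace.equiv m ℝ).symm (A *ᵥ x) := rfl
  rw [hx]
  have h1 : ‖(EuclideanSpace.equiv m ℝ).symm (A *ᵥ x)‖ ^ 2 ≤ (c * ‖x‖) ^ 2 := by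
    rw [enorm_sq, mul_pow]
    calc (A *ᵥ x) ⬝ᵥ (A *ᵥ x) ≤ c ^ 2 * ((x : n → ℝ) ⬝ᵥ (x : n → ℝ)) := h x
    _ = c ^ 2 * ‖x‖ ^ 2 := by rw [enorm_sq' x]
  have h2 : 0 ≤ c * ‖x‖ := mul_nonneg hc (norm_nonneg _)
  nlinarith [norm_nonneg ((EuclideanSpace.equiv m ℝ).symm (A *ᵥ x))]

lemma dot_le_norm (A : Matrix m n ℝ) (y : n → ℝ) :
    (A *ᵥ y) ⬝ᵥ (A *ᵥ y) ≤ ‖A‖ ^ 2 * (y ⬝ᵥ y) := by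
  have h2 : ‖(EuclideanSpace.equiv m ℝ).symm (A *ᵥ y)‖
      ≤ ‖A‖ * ‖(EuclideanSpace.equiv n ℝ).symm y‖ :=
    Matrix.l2_opNorm_mulVec A ((EuclideanSpace.equiv n ℝ).symm y)
  have h3 := enorm_sq (A *ᵥ y)
  have h4 := enorm_sq (m := n) y
  rw [← h3]
  rw [← h4]
  nlinarith [norm_nonneg ((EuclideanSpace.equiv m ℝ).symm (A *ᵥ y)), norm_nonneg A,
    norm_nonneg ((EuclideanSpace.equiv n ℝ).symm y)]

lemma exists_orthonormal_extension_matrix {q : ℕ} {ι : Type*} [Fintype ι] [DecidableEq ι]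
    (hcard : Fintype.card ι = q) (v : ι → (Fin q → ℝ)) (s : Set ι)
    (hv : ∀ i ∈ s, ∀ j ∈ s, v i ⬝ᵥ v j = if i = j then 1 else 0) :
    ∃ B : Matrix (Fin q) ι ℝ, Bᵀ * B = 1 ∧ ∀ i ∈ s, (fun p => B p i) = v i := by
  classical
  set v' : ι → EuclideanSpace ℝ (Fin q) := fun i => (EuclideanSpace.equiv (Fin q) ℝ).symm (v i)
    with hv'def
  have hinner : ∀ i j : ι, ⟪v' i, v' j⟫_ℝ = v i ⬝ᵥ v j := by
    intro i j
    simp [v', PiLp.inner_apply, dotProduct, RCLike.inner_apply, mul_comm]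
  have hv' : Orthonormal ℝ (s.restrict v') := by
    rw [orthonormal_iff_ite]
    rintro ⟨i, hi⟩ ⟨j, hj⟩
    show ⟪v' i, v' j⟫_ℝ = _
    rw [hinner, hv i hi j hj]
    simp [Subtype.ext_iff]
  obtain ⟨b, hb⟩ := hv'.exists_orthonormalBasis_extension_of_card_eq
    (by simp [hcard, finrank_euclideanSpace])
  refine ⟨Matrix.of fun p i => b i p, ?_, ?_⟩
  · ext i j
    have h1 := orthonormal_iff_ite.mp b.orthonormal i j
    have h2 : ⟪b i, b j⟫_ℝ = ∑ p, b i p * b j p := by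
      simp [PiLp.inner_apply, RCLike.inner_apply, mul_comm]
    simp only [Matrix.mul_apply, Matrix.transpose_apply, Matrix.of_apply, Matrix.one_apply]
    rw [← h2, h1]
  · intro i hi
    funext p
    simp only [Matrix.of_apply]
    rw [hb i hi]
    rfl

lemma completion {d r : ℕ} (hrd : r ≤ d) (O : Matrix (Fin d) (Fin r) ℝ) (h : Oᵀ * O = 1) :
    ∃ R : Matrix (Fin d) (Fin (d - r)) ℝ, Rᵀ * R = 1 ∧ Oᵀ * R = 0 := by
  classical
  have hcard : Fintype.card (Fin r ⊕ Fin (d - r)) = d := by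
    simp [Nat.add_sub_cancel' hrd]
  set v : (Fin r ⊕ Fin (d - r)) → (Fin d → ℝ) :=
    Sum.elim (fun j p => O p j) (fun _ _ => 0) with hvdef
  have hdot : ∀ a b : Fin r, (fun p => O p a) ⬝ᵥ (fun p => O p b) = (Oᵀ * O) a b := by
    intro a b; simp [Matrix.mul_apply, dotProduct]
  have hv : ∀ i ∈ Set.range (Sum.inl : Fin r → Fin r ⊕ Fin (d - r)),
      ∀ j ∈ Set.range (Sum.inl : Fin r → Fin r ⊕ Fin (d - r)),
      v i ⬝ᵥ v j = if i = j then 1 else 0 := by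
    rintro _ ⟨a, rfl⟩ _ ⟨b, rfl⟩
    simp only [hvdef, Sum.elim_inl]
    rw [hdot, h]
    simp [Matrix.one_apply]
  obtain ⟨B, hB1, hB2⟩ := exists_orthonormal_extension_matrix hcard v _ hv
  refine ⟨Matrix.of fun p j => B p (Sum.inr j), ?_, ?_⟩
  · ext j k
    have := congrFun (congrFun hB1 (Sum.inr j)) (Sum.inr k)
    simpa [Matrix.mul_apply, Matrix.one_apply] using this
  · ext j k
    have hcol := hB2 (Sum.inl j) ⟨j, rfl⟩
    have := congrFun (congrFun hB1 (Sum.inl j)) (Sum.inr k)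
    simp only [Matrix.one_apply, reduceIte, Sum.inl.injEq] at this
    simp only [Matrix.mul_apply, Matrix.transpose_apply, Matrix.of_apply, Matrix.zero_apply]
    rw [show (0:ℝ) = if (Sum.inl j : Fin r ⊕ Fin (d-r)) = Sum.inr k then 1 else 0 by simp]
    rw [← this]
    simp only [Matrix.mul_apply, Matrix.transpose_apply]
    congr 1
    funext p
    rw [congrFun hcol p]
    simp [hvdef]

/-- Spectral decomposition of a real positive semidefinite matrix. -/
lemma spectral_psd {H : Matrix n n ℝ} (h : H.PosSemidef) :
    ∃ (P : Matrix n n ℝ) (e : n → ℝ), Pᵀ * P = 1 ∧ (∀ i, 0 ≤ e i) ∧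
      H = P * diagonal e * Pᵀ := by
  classical
  have hH : H.IsHermitian := h.1
  refine ⟨(Matrix.IsHermitian.eigenvectorUnitary hH : Matrix n n ℝ), hH.eigenvalues, ?_,
    fun i => h.eigenvalues_nonneg i, ?_⟩
  · have := (Matrix.mem_unitaryGroup_iff').mp (Matrix.IsHermitian.eigenvectorUnitary hH).2
    rwa [← Matrix.conjTranspose_eq_transpose_of_trivial]
  · conv_lhs => rw [hH.spectral_theorem]
    rw [Unitary.conjStarAlgAut_apply, Matrix.star_eq_conjTranspose,
      Matrix.conjTranspose_eq_transpose_of_trivial]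
    congr 1

lemma quad_eq (P : Matrix n n ℝ) (e : n → ℝ) (x : n → ℝ) :
    x ⬝ᵥ ((P * diagonal e * Pᵀ) *ᵥ x) = ∑ i, e i * ((Pᵀ *ᵥ x) i) ^ 2 := by
  have h1 : (P * diagonal e * Pᵀ) *ᵥ x = P *ᵥ (diagonal e *ᵥ (Pᵀ *ᵥ x)) := by
    rw [← Matrix.mulVec_mulVec, ← Matrix.mulVec_mulVec]
  rw [h1, dot_left P x (diagonal e *ᵥ (Pᵀ *ᵥ x))]
  have h2 : diagonal e *ᵥ (Pᵀ *ᵥ x) = fun i => e i * (Pᵀ *ᵥ x) i := by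
    funext i
    simp [Matrix.mulVec, dotProduct, Matrix.diagonal_apply, ite_mul]
  rw [h2]
  simp [dotProduct, sq]
  congr 1
  funext i
  ring

lemma quad_base (P : Matrix n n ℝ) (x : n → ℝ) (hPP : P * Pᵀ = 1) :
    (∑ i, ((Pᵀ *ᵥ x) i) ^ 2) = x ⬝ᵥ x := by
  have h1 : (∑ i, ((Pᵀ *ᵥ x) i) ^ 2) = (Pᵀ *ᵥ x) ⬝ᵥ (Pᵀ *ᵥ x) := by
    simp [dotProduct, sq]
  rw [h1, dot_AB, Matrix.transpose_transpose, hPP, Matrix.one_mulVec]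

lemma svd {q : ℕ} (K : Matrix (Fin q) (Fin q) ℝ) :
    ∃ (U W : Matrix (Fin q) (Fin q) ℝ) (g : Fin q → ℝ),
      Uᵀ * U = 1 ∧ Wᵀ * W = 1 ∧ (∀ i, 0 ≤ g i) ∧ K = W * diagonal g * Uᵀ := by
  classical
  have hpsd : (Kᵀ * K).PosSemidef := by
    have := Matrix.posSemidef_conjTranspose_mul_self K
    rwa [Matrix.conjTranspose_eq_transpose_of_trivial] at this
  obtain ⟨U, dg, hUU, hdnn, hspec⟩ := spectral_psd hpsd
  set u : Fin q → (Fin q → ℝ) := fun i => U *ᵥ Pi.single i 1 with hudef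
  have hUcomm : U * Uᵀ = 1 := mul_eq_one_comm.mp hUU
  have huu : ∀ i j, u i ⬝ᵥ u j = if i = j then 1 else 0 := by
    intro i j
    rw [hudef, dot_AB, hUU, Matrix.one_mulVec]
    simp [dotProduct_single, Pi.single_apply, eq_comm]
  have hKu : ∀ i j, (K *ᵥ u i) ⬝ᵥ (K *ᵥ u j) = if i = j then dg i else 0 := by
    intro i j
    rw [dot_AB, hspec, ← Matrix.mulVec_mulVec, ← Matrix.mulVec_mulVec]
    have h1 : Uᵀ *ᵥ u j = Pi.single j 1 := by
      rw [hudef, Matrix.mulVec_mulVec, hUU, Matrix.one_mulVec]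
    rw [h1, Matrix.diagonal_mulVec_single]
    have h2 : (Pi.single j (dg j * 1) : Fin q → ℝ) = dg j • (Pi.single j 1 : Fin q → ℝ) := by
      funext p
      by_cases hp : p = j <;> simp [hp, Pi.single_apply]
    rw [h2, Matrix.mulVec_smul, dotProduct_smul,
      show U *ᵥ Pi.single j 1 = u j from rfl, huu i j]
    simp only [smul_eq_mul, mul_ite, mul_one, mul_zero]
    by_cases hij : i = j <;> simp [hij]
  set g : Fin q → ℝ := fun i => Real.sqrt (dg i) with hgdef
  have hgnn : ∀ i, 0 ≤ g i := fun i => Real.sqrt_nonneg _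
  set v : Fin q → (Fin q → ℝ) := fun i => (g i)⁻¹ • (K *ᵥ u i) with hvdef
  have hv : ∀ i ∈ {i : Fin q | g i ≠ 0}, ∀ j ∈ {i : Fin q | g i ≠ 0},
      v i ⬝ᵥ v j = if i = j then 1 else 0 := by
    intro i hi j hj
    simp only [Set.mem_setOf_eq] at hi hj
    rw [hvdef]
    simp only [smul_dotProduct, dotProduct_smul, smul_eq_mul]
    rw [hKu i j]
    by_cases hij : i = j
    · subst hij
      have hgg : g i * g i = dg i := Real.mul_self_sqrt (hdnn i)
      simp only [if_pos rfl]
      rw [← hgg]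
      field_simp
      simp
    · simp [hij]
  obtain ⟨W, hWW, hWcol⟩ := exists_orthonormal_extension_matrix (by simp) v _ hv
  refine ⟨U, W, g, hUU, hWW, hgnn, ?_⟩
  have hKU : K * U = W * diagonal g := by
    ext i j
    have hcol : (K * U) i j = (K *ᵥ u j) i := by
      simp [Matrix.mul_apply, hudef, Matrix.mulVec, dotProduct, Pi.single_apply]
    rw [hcol, Matrix.mul_diagonal]
    by_cases hgj : g j = 0
    · have hdj : dg j = 0 := Real.sqrt_eq_zero (hdnn j) |>.mp hgj
      have hzero : (K *ᵥ u j) ⬝ᵥ (K *ᵥ u j) = 0 := by rw [hKu j j]; simp [hdj]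
      have hz : K *ᵥ u j = 0 := dotProduct_self_eq_zero.mp hzero
      rw [hz]
      simp [hgj]
    · have happ : W i j = v j i := congrFun (hWcol j hgj) i
      rw [happ, hvdef]
      simp only [Pi.smul_apply, smul_eq_mul]
      field_simp
  calc K = K * (U * Uᵀ) := by rw [hUcomm, mul_one]
  _ = (K * U) * Uᵀ := by rw [mul_assoc]
  _ = W * diagonal g * Uᵀ := by rw [hKU]

lemma fromCols_orth {d r q : ℕ} (O : Matrix (Fin d) (Fin r) ℝ) (R : Matrix (Fin d) (Fin q) ℝ)
    (h1 : Oᵀ * O = 1) (h2 : Rᵀ * R = 1) (h3 : Oᵀ * R = 0) :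
    (fromCols O R)ᵀ * fromCols O R = 1 := by
  have h4 : Rᵀ * O = 0 := by
    have := congrArg Matrix.transpose h3
    rwa [Matrix.transpose_mul, Matrix.transpose_transpose, Matrix.transpose_zero] at this
  rw [transpose_fromCols, fromRows_mul_fromCols, h1, h2, h3, h4, fromBlocks_one]

lemma rows_id {d r q : ℕ} (hsum : r + q = d) {O : Matrix (Fin d) (Fin r) ℝ}
    {R : Matrix (Fin d) (Fin q) ℝ}
    (h : (fromCols O R)ᵀ * fromCols O R = 1) : O * Oᵀ + R * Rᵀ = 1 := by
  have e : (Fin r ⊕ Fin q) ≃ Fin d := finSumFinEquiv.trans (finCongr hsum)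
  have h2 := (Matrix.mul_eq_one_comm_of_equiv e).mp h
  rwa [transpose_fromCols, fromCols_mul_fromRows] at h2

end Stmt17Aux
end Stmt17Aux

set_option maxHeartbeats 1600000

/-- Orthonormal completion with controlled spectral-norm distance: two `d×r` matrices with
orthonormal columns (`r < d`) can be completed to `d×d` orthogonal matrices whose
spectral-norm distance is at most `√2` times that of the original matrices. -/
theorem stmt17 (d r : ℕ) (hrd : r < d)
    (O₁ O₂ : Matrix (Fin d) (Fin r) ℝ)
    (h₁ : O₁ᵀ * O₁ = 1) (h₂ : O₂ᵀ * O₂ = 1) :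
    ∃ R₁ R₂ : Matrix (Fin d) (Fin (d - r)) ℝ,
      (Matrix.fromCols O₁ R₁)ᵀ * Matrix.fromCols O₁ R₁ = 1 ∧
        (Matrix.fromCols O₂ R₂)ᵀ * Matrix.fromCols O₂ R₂ = 1 ∧
        ‖Matrix.fromCols O₁ R₁ - Matrix.fromCols O₂ R₂‖ ≤ Real.sqrt 2 * ‖O₁ - O₂‖ := by
  classical
  obtain ⟨R₁, hR₁, hOR₁⟩ := Stmt17Aux.completion hrd.le O₁ h₁
  obtain ⟨R₂', hR₂', hOR₂'⟩ := Stmt17Aux.completion hrd.le O₂ h₂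
  have hA₁ := Stmt17Aux.fromCols_orth O₁ R₁ h₁ hR₁ hOR₁
  have hA₂' := Stmt17Aux.fromCols_orth O₂ R₂' h₂ hR₂' hOR₂'
  rcases Nat.eq_zero_or_pos r with hr0 | hrpos
  · subst hr0
    have he : Matrix.fromCols O₂ R₁ = Matrix.fromCols O₁ R₁ := by
      ext i j
      cases j with
      | inl a => exact a.elim0
      | inr b => rfl
    exact ⟨R₁, R₁, hA₁, by rw [he]; exact hA₁, by
      rw [he, sub_self, norm_zero]; positivity⟩
  -- main case : 0 < r
  have hq : 0 < d - r := Nat.sub_pos_of_lt hrd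
  have hner : Nonempty (Fin r) := Fin.pos_iff_nonempty.mp hrpos
  have hneq : Nonempty (Fin (d - r)) := Fin.pos_iff_nonempty.mp hq
  have hsum : r + (d - r) = d := Nat.add_sub_cancel' hrd.le
  have hrow₁ : O₁ * O₁ᵀ + R₁ * R₁ᵀ = 1 := Stmt17Aux.rows_id hsum hA₁
  have hrow₂ : O₂ * O₂ᵀ + R₂' * R₂'ᵀ = 1 := Stmt17Aux.rows_id hsum hA₂'
  obtain ⟨U, W, g, hUU, hWW, hg, hK⟩ := Stmt17Aux.svd (R₁ᵀ * R₂')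
  have hUcomm : U * Uᵀ = 1 := mul_eq_one_comm.mp hUU
  have hWcomm : W * Wᵀ = 1 := mul_eq_one_comm.mp hWW
  have hVV : (U * Wᵀ)ᵀ * (U * Wᵀ) = 1 := by
    rw [Matrix.transpose_mul, Matrix.transpose_transpose, Matrix.mul_assoc,
      ← Matrix.mul_assoc Uᵀ U Wᵀ, hUU, Matrix.one_mul, hWcomm]
  set R₂ : Matrix (Fin d) (Fin (d - r)) ℝ := R₂' * (U * Wᵀ) with hR₂def
  have hR₂R₂ : R₂ᵀ * R₂ = 1 := by
    rw [hR₂def, Matrix.transpose_mul, Matrix.mul_assoc,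
      ← Matrix.mul_assoc R₂'ᵀ R₂' (U * Wᵀ), hR₂', Matrix.one_mul, hVV]
  have hOR₂ : O₂ᵀ * R₂ = 0 := by
    rw [hR₂def, ← Matrix.mul_assoc, hOR₂', Matrix.zero_mul]
  have hA₂ := Stmt17Aux.fromCols_orth O₂ R₂ h₂ hR₂R₂ hOR₂
  refine ⟨R₁, R₂, hA₁, hA₂, ?_⟩
  set c : ℝ := ‖O₁ - O₂‖ with hcdef
  have hc : 0 ≤ c := norm_nonneg _
  -- R₁ᵀ * R₂ is the psd polar part
  have hS : R₁ᵀ * R₂ = W * Matrix.diagonal g * Wᵀ := by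
    rw [hR₂def, ← Matrix.mul_assoc, hK, Matrix.mul_assoc (W * Matrix.diagonal g) Uᵀ (U * Wᵀ),
      ← Matrix.mul_assoc Uᵀ U Wᵀ, hUU, Matrix.one_mul]
  have hdiagT : (W * Matrix.diagonal g * Wᵀ)ᵀ = W * Matrix.diagonal g * Wᵀ := by
    rw [Matrix.transpose_mul, Matrix.transpose_mul, Matrix.transpose_transpose,
      Matrix.diagonal_transpose, Matrix.mul_assoc]
  have hST : R₂ᵀ * R₁ = W * Matrix.diagonal g * Wᵀ := by
    have h5 : (R₁ᵀ * R₂)ᵀ = R₂ᵀ * R₁ := by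
      rw [Matrix.transpose_mul, Matrix.transpose_transpose]
    rw [← h5, hS, hdiagT]
  obtain ⟨i₀, hi₀⟩ := Finite.exists_min g
  set s : ℝ := g i₀ with hsdef
  have hs0 : 0 ≤ s := hg i₀
  -- quadratic lower bound for the polar part
  have hquadS : ∀ x : Fin (d - r) → ℝ,
      s * (x ⬝ᵥ x) ≤ x ⬝ᵥ ((W * Matrix.diagonal g * Wᵀ) *ᵥ x) := by
    intro x
    rw [Stmt17Aux.quad_eq]
    calc s * (x ⬝ᵥ x) = s * ∑ i, ((Wᵀ *ᵥ x) i) ^ 2 := by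
          rw [Stmt17Aux.quad_base W x hWcomm]
    _ = ∑ i, s * ((Wᵀ *ᵥ x) i) ^ 2 := Finset.mul_sum _ _ _
    _ ≤ ∑ i, g i * ((Wᵀ *ᵥ x) i) ^ 2 :=
        Finset.sum_le_sum fun i _ => mul_le_mul_of_nonneg_right (hi₀ i) (sq_nonneg _)
  -- the key scalar inequality : 2 - 2*s ≤ c^2
  have hE : 2 - 2 * s ≤ c ^ 2 := by
    set M : Matrix (Fin r) (Fin r) ℝ := O₁ᵀ * O₂ with hMdef
    set C : Matrix (Fin (d - r)) (Fin r) ℝ := R₁ᵀ * O₂ with hCdef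
    have hMC : Mᵀ * M + Cᵀ * C = 1 := by
      rw [hMdef, hCdef, Matrix.transpose_mul, Matrix.transpose_transpose,
        Matrix.transpose_mul, Matrix.transpose_transpose]
      have hh : O₂ᵀ * O₁ * (O₁ᵀ * O₂) + O₂ᵀ * R₁ * (R₁ᵀ * O₂)
          = O₂ᵀ * ((O₁ * O₁ᵀ + R₁ * R₁ᵀ) * O₂) := by
        simp only [Matrix.mul_add, Matrix.add_mul, Matrix.mul_assoc]
      rw [hh, hrow₁, Matrix.one_mul, h₂]
    have hCK : C * Cᵀ + (R₁ᵀ * R₂') * (R₁ᵀ * R₂')ᵀ = 1 := by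
      rw [hCdef, Matrix.transpose_mul, Matrix.transpose_transpose,
        Matrix.transpose_mul, Matrix.transpose_transpose]
      have hh : R₁ᵀ * O₂ * (O₂ᵀ * R₁) + R₁ᵀ * R₂' * (R₂'ᵀ * R₁)
          = R₁ᵀ * ((O₂ * O₂ᵀ + R₂' * R₂'ᵀ) * R₁) := by
        simp only [Matrix.mul_add, Matrix.add_mul, Matrix.mul_assoc]
      rw [hh, hrow₂, Matrix.one_mul, hR₁]
    -- the vector z achieving the least singular value
    set z : Fin (d - r) → ℝ := W *ᵥ Pi.single i₀ 1 with hzdef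
    have hz1 : z ⬝ᵥ z = 1 := by
      rw [hzdef, Stmt17Aux.dot_AB, hWW, Matrix.one_mulVec]
      simp [dotProduct_single, Pi.single_apply]
    have hKz : (R₁ᵀ * R₂')ᵀ *ᵥ z = s • (U *ᵥ Pi.single i₀ 1) := by
      have htr : (R₁ᵀ * R₂')ᵀ = U * Matrix.diagonal g * Wᵀ := by
        rw [hK, Matrix.transpose_mul, Matrix.transpose_mul, Matrix.transpose_transpose,
          Matrix.diagonal_transpose, Matrix.mul_assoc]
      rw [htr, hzdef, Matrix.mulVec_mulVec, Matrix.mul_assoc (U * Matrix.diagonal g) Wᵀ W,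
        hWW, Matrix.mul_one, ← Matrix.mulVec_mulVec, Matrix.diagonal_mulVec_single]
      have h2 : (Pi.single i₀ (g i₀ * 1) : Fin (d - r) → ℝ)
          = s • (Pi.single i₀ 1 : Fin (d - r) → ℝ) := by
        funext p
        by_cases hp : p = i₀ <;> simp [hp, Pi.single_apply, hsdef]
      rw [h2, Matrix.mulVec_smul]
    have hKzdot : ((R₁ᵀ * R₂')ᵀ *ᵥ z) ⬝ᵥ ((R₁ᵀ * R₂')ᵀ *ᵥ z) = s ^ 2 := by
      rw [hKz]
      rw [smul_dotProduct, dotProduct_smul, Stmt17Aux.dot_AB, hUU, Matrix.one_mulVec]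
      simp [dotProduct_single, Pi.single_apply, sq]
    have hCz : (Cᵀ *ᵥ z) ⬝ᵥ (Cᵀ *ᵥ z) = 1 - s ^ 2 := by
      rw [Stmt17Aux.dot_AB, Matrix.transpose_transpose]
      have hsub : C * Cᵀ = 1 - (R₁ᵀ * R₂') * (R₁ᵀ * R₂')ᵀ := eq_sub_of_add_eq hCK
      rw [hsub, Matrix.sub_mulVec, Matrix.one_mulVec, dotProduct_sub, hz1]
      have h6 : ((R₁ᵀ * R₂')ᵀ *ᵥ z) ⬝ᵥ ((R₁ᵀ * R₂')ᵀ *ᵥ z)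
          = z ⬝ᵥ (((R₁ᵀ * R₂') * (R₁ᵀ * R₂')ᵀ) *ᵥ z) := by
        rw [Stmt17Aux.dot_AB (R₁ᵀ * R₂')ᵀ (R₁ᵀ * R₂')ᵀ z z, Matrix.transpose_transpose]
      rw [h6] at hKzdot
      rw [hKzdot]
    have hnormC : 1 - s ^ 2 ≤ ‖C‖ ^ 2 := by
      have h7 := Stmt17Aux.dot_le_norm Cᵀ z
      rw [hCz, hz1, mul_one] at h7
      rwa [show ‖Cᵀ‖ = ‖C‖ from by
        rw [← Matrix.conjTranspose_eq_transpose_of_trivial, Matrix.l2_opNorm_conjTranspose]] at h7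
    -- spectral decomposition of Cᵀ * C
    have hpsdC : (Cᵀ * C).PosSemidef := by
      have := Matrix.posSemidef_conjTranspose_mul_self C
      rwa [Matrix.conjTranspose_eq_transpose_of_trivial] at this
    obtain ⟨P, e, hPP, he, hCC⟩ := Stmt17Aux.spectral_psd hpsdC
    have hPcomm : P * Pᵀ = 1 := mul_eq_one_comm.mp hPP
    obtain ⟨j₀, hj₀⟩ := Finite.exists_max e
    have hCnorm : ‖C‖ ≤ Real.sqrt (e j₀) := by
      refine Stmt17Aux.norm_le_of_dot C (Real.sqrt_nonneg _) fun x => ?_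
      rw [Stmt17Aux.dot_AB, hCC, Stmt17Aux.quad_eq, Real.sq_sqrt (he j₀)]
      calc (∑ i, e i * ((Pᵀ *ᵥ x) i) ^ 2) ≤ ∑ i, e j₀ * ((Pᵀ *ᵥ x) i) ^ 2 :=
            Finset.sum_le_sum fun i _ => mul_le_mul_of_nonneg_right (hj₀ i) (sq_nonneg _)
      _ = e j₀ * ∑ i, ((Pᵀ *ᵥ x) i) ^ 2 := (Finset.mul_sum _ _ _).symm
      _ = e j₀ * (x ⬝ᵥ x) := by rw [Stmt17Aux.quad_base P x hPcomm]
    have hej : 1 - s ^ 2 ≤ e j₀ := by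
      have h8 : ‖C‖ ^ 2 ≤ e j₀ := by
        have := pow_le_pow_left₀ (norm_nonneg C) hCnorm 2
        rwa [Real.sq_sqrt (he j₀)] at this
      linarith
    -- eigenvector y of Cᵀ C with top eigenvalue
    set y : Fin r → ℝ := P *ᵥ Pi.single j₀ 1 with hydef
    have hy1 : y ⬝ᵥ y = 1 := by
      rw [hydef, Stmt17Aux.dot_AB, hPP, Matrix.one_mulVec]
      simp [dotProduct_single, Pi.single_apply]
    have hCCy : (Cᵀ * C) *ᵥ y = e j₀ • y := by
      rw [hCC, hydef, Matrix.mulVec_mulVec, Matrix.mul_assoc (P * Matrix.diagonal e) Pᵀ P,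
        hPP, Matrix.mul_one, ← Matrix.mulVec_mulVec, Matrix.diagonal_mulVec_single]
      have h2 : (Pi.single j₀ (e j₀ * 1) : Fin r → ℝ)
          = e j₀ • (Pi.single j₀ 1 : Fin r → ℝ) := by
        funext p
        by_cases hp : p = j₀ <;> simp [hp, Pi.single_apply]
      rw [h2, Matrix.mulVec_smul]
    have hMy : (M *ᵥ y) ⬝ᵥ (M *ᵥ y) = 1 - e j₀ := by
      rw [Stmt17Aux.dot_AB]
      have hsub2 : Mᵀ * M = 1 - Cᵀ * C := eq_sub_of_add_eq hMC
      rw [hsub2, Matrix.sub_mulVec, Matrix.one_mulVec, dotProduct_sub, hy1, hCCy,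
        dotProduct_smul, hy1]
      simp
    have hMys : (M *ᵥ y) ⬝ᵥ (M *ᵥ y) ≤ s ^ 2 := by rw [hMy]; linarith
    have hyMy : y ⬝ᵥ (M *ᵥ y) ≤ s := by
      have h9 := Stmt17Aux.dot_sq_le y (M *ᵥ y)
      rw [hy1, one_mul] at h9
      have ht : (y ⬝ᵥ (M *ᵥ y)) ^ 2 ≤ s ^ 2 := le_trans h9 hMys
      calc y ⬝ᵥ (M *ᵥ y) ≤ |y ⬝ᵥ (M *ᵥ y)| := le_abs_self _
      _ = Real.sqrt ((y ⬝ᵥ (M *ᵥ y)) ^ 2) := (Real.sqrt_sq_eq_abs _).symm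
      _ ≤ Real.sqrt (s ^ 2) := Real.sqrt_le_sqrt ht
      _ = s := Real.sqrt_sq hs0
    -- conclude
    have h10 := Stmt17Aux.dot_le_norm (O₁ - O₂) y
    rw [hy1, mul_one] at h10
    have h11 : ((O₁ - O₂) *ᵥ y) ⬝ᵥ ((O₁ - O₂) *ᵥ y) = 2 - 2 * (y ⬝ᵥ (M *ᵥ y)) := by
      rw [Stmt17Aux.dot_AB]
      have hexp : (O₁ - O₂)ᵀ * (O₁ - O₂) = (1 - M) + (1 - Mᵀ) := by
        rw [Matrix.transpose_sub, Matrix.sub_mul, Matrix.mul_sub, Matrix.mul_sub,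
          h₁, h₂, hMdef]
        have : O₂ᵀ * O₁ = Mᵀ := by
          rw [hMdef, Matrix.transpose_mul, Matrix.transpose_transpose]
        rw [this]
        abel
      rw [hexp, Matrix.add_mulVec, dotProduct_add, Matrix.sub_mulVec, Matrix.sub_mulVec,
        Matrix.one_mulVec, dotProduct_sub, dotProduct_sub, hy1]
      have h12 : y ⬝ᵥ (Mᵀ *ᵥ y) = y ⬝ᵥ (M *ᵥ y) := by
        rw [Stmt17Aux.dot_tr, dotProduct_comm]
      rw [h12]
      ring
    rw [h11] at h10
    have : c = ‖O₁ - O₂‖ := hcdef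
    nlinarith [h10, hyMy]
  -- norm bound on R₁ - R₂
  have hCnormR : ‖R₁ - R₂‖ ≤ c := by
    refine Stmt17Aux.norm_le_of_dot _ hc fun x => ?_
    rw [Stmt17Aux.dot_AB]
    have hexp : (R₁ - R₂)ᵀ * (R₁ - R₂)
        = (1 - W * Matrix.diagonal g * Wᵀ) + (1 - W * Matrix.diagonal g * Wᵀ) := by
      rw [Matrix.transpose_sub, Matrix.sub_mul, Matrix.mul_sub, Matrix.mul_sub,
        hR₁, hR₂R₂, hS, hST]
      abel
    rw [hexp, Matrix.add_mulVec, dotProduct_add, Matrix.sub_mulVec,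
      Matrix.one_mulVec, dotProduct_sub]
    have h13 := hquadS x
    have h14 := Stmt17Aux.dot_self_nonneg x
    nlinarith [hE]
  -- final assembly
  have hsub : Matrix.fromCols O₁ R₁ - Matrix.fromCols O₂ R₂
      = Matrix.fromCols (O₁ - O₂) (R₁ - R₂) := by
    ext i j
    cases j with
    | inl a => simp [Matrix.fromCols]
    | inr b => simp [Matrix.fromCols]
  rw [hsub]
  refine Stmt17Aux.norm_le_of_dot _ (by positivity) fun x => ?_
  have hx : x = Sum.elim (fun i => x (Sum.inl i)) (fun i => x (Sum.inr i)) := by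
    funext j; cases j <;> rfl
  rw [hx, Matrix.fromCols_mulVec_sumElim]
  set x₁ : Fin r → ℝ := fun i => x (Sum.inl i) with hx₁
  set x₂ : Fin (d - r) → ℝ := fun i => x (Sum.inr i) with hx₂
  set a : Fin d → ℝ := (O₁ - O₂) *ᵥ x₁ with hadef
  set b : Fin d → ℝ := (R₁ - R₂) *ᵥ x₂ with hbdef
  have hsplit : (Sum.elim x₁ x₂ : Fin r ⊕ Fin (d - r) → ℝ) ⬝ᵥ Sum.elim x₁ x₂
      = x₁ ⬝ᵥ x₁ + x₂ ⬝ᵥ x₂ := by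
    simp [dotProduct, Fintype.sum_sum_type]
  have hexp2 : (a + b) ⬝ᵥ (a + b) = a ⬝ᵥ a + 2 * (a ⬝ᵥ b) + b ⬝ᵥ b := by
    rw [dotProduct_add, add_dotProduct, add_dotProduct, dotProduct_comm b a]
    ring
  have haa : a ⬝ᵥ a ≤ c ^ 2 * (x₁ ⬝ᵥ x₁) := Stmt17Aux.dot_le_norm (O₁ - O₂) x₁
  have hbb : b ⬝ᵥ b ≤ c ^ 2 * (x₂ ⬝ᵥ x₂) := by
    have h15 := Stmt17Aux.dot_le_norm (R₁ - R₂) x₂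
    have h16 : ‖R₁ - R₂‖ ^ 2 ≤ c ^ 2 := pow_le_pow_left₀ (norm_nonneg _) hCnormR 2
    have h17 := Stmt17Aux.dot_self_nonneg x₂
    nlinarith
  have hab := Stmt17Aux.dot_sq_le a b
  have h18 := Stmt17Aux.dot_self_nonneg a
  have h19 := Stmt17Aux.dot_self_nonneg b
  have hab2 : 2 * (a ⬝ᵥ b) ≤ a ⬝ᵥ a + b ⬝ᵥ b := by
    nlinarith [hab, sq_nonneg (a ⬝ᵥ a - b ⬝ᵥ b), h18, h19]
  have h20 := Stmt17Aux.dot_self_nonneg x₁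
  have h21 := Stmt17Aux.dot_self_nonneg x₂
  rw [hsplit, hexp2]
  have h22 : (Real.sqrt 2 * c) ^ 2 = 2 * c ^ 2 := by
    rw [mul_pow, Real.sq_sqrt (by norm_num : (0:ℝ) ≤ 2)]
  rw [h22]
  linarith [haa, hbb, hab2]
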